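/- If Γ_E(R) has at least 3 vertices, then any vertex adjacent to a leaf is an associated prime maximal in F = {ann(z) : 0 ≠ z ∈ R}. -/

import Mathlib

open scoped Classical

noncomputable section

/-- The annihilator ideal of an element `x` of a commutative ring `R`. -/
def ann (R : Type*) [CommRing R] (x : R) : Ideal R := Ideal.torsionOf R R x

/-- The type of nonzero zero divisors of `R`. -/
def ZD (R : Type*) [CommRing R] : Type _ :=
  {x : R // x ≠ 0 ∧ ∃ y : R, y ≠ 0 ∧ x * y = 0}

/-- Two zero divisors are equivalent iff they have the same annihilator. -/
instance annSetoid (R : Type*) [CommRing R] : Setoid (ZD R) :=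
  ⟨fun a b => ann R a.1 = ann R b.1,
   fun _ => rfl, Eq.symm, Eq.trans⟩

/-- The vertex set of `Γ_E(R)`: equivalence classes of nonzero zero divisors. -/
def GammaEV (R : Type*) [CommRing R] : Type _ := Quotient (annSetoid R)

/-- The class of a nonzero zero divisor. -/
def cls (R : Type*) [CommRing R] (a : ZD R) : GammaEV R :=
  Quotient.mk (annSetoid R) a

/-- The graph `Γ_E(R)` of equivalence classes of zero divisors. -/
def gammaE (R : Type*) [CommRing R] : SimpleGraph (GammaEV R) where
  Adj u v := u ≠ v ∧ ∃ a b : ZD R, cls R a = u ∧ cls R b = v ∧ a.1 * b.1 = 0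
  symm := by
    constructor
    rintro u v ⟨huv, a, b, ha, hb, hab⟩
    exact ⟨huv.symm, b, a, hb, ha, by rwa [mul_comm] at hab⟩
  loopless := by constructor; rintro u ⟨h, -⟩; exact h rfl

/-- `I` is a maximal element of the family `F = {ann x : 0 ≠ x ∈ R}`. -/
def MaxAnn (R : Type*) [CommRing R] (I : Ideal R) : Prop :=
  (∃ x : R, x ≠ 0 ∧ I = ann R x) ∧
    ∀ y : R, y ≠ 0 → I ≤ ann R y → I = ann R y


lemma mem_ann_iff {R : Type*} [CommRing R] {r x : R} : r ∈ ann R x ↔ r * x = 0 := by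
  simp [ann, Ideal.mem_torsionOf_iff, smul_eq_mul]

lemma cls_eq_iff {R : Type*} [CommRing R] {a b : ZD R} :
    cls R a = cls R b ↔ ann R a.1 = ann R b.1 :=
  ⟨fun h => Quotient.exact h, fun h => Quotient.sound h⟩

lemma maxAnn_isPrime {R : Type*} [CommRing R] {I : Ideal R} (h : MaxAnn R I) : I.IsPrime := by
  obtain ⟨⟨x, hx0, rfl⟩, hmax⟩ := h
  constructor
  · intro htop
    have h1 : (1 : R) ∈ ann R x := htop ▸ Submodule.mem_top
    rw [mem_ann_iff, one_mul] at h1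
    exact hx0 h1
  · intro r s hrs
    rw [or_iff_not_imp_right]
    intro hs
    have hsx : s * x ≠ 0 := fun h => hs (mem_ann_iff.mpr h)
    have hle : ann R x ≤ ann R (s * x) := by
      intro t ht
      rw [mem_ann_iff] at ht ⊢
      rw [mul_comm s x, ← mul_assoc, ht, zero_mul]
    have heq := hmax (s * x) hsx hle
    have : r ∈ ann R (s * x) := by
      rw [mem_ann_iff, ← mul_assoc]
      exact mem_ann_iff.mp hrs
    rw [← heq] at this
    exact this


theorem stmt17 (R : Type*) [CommRing R] [IsNoetherianRing R]
    (hcard : 3 ≤ (Set.univ : Set (GammaEV R)).encard)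
    (b : ZD R) (u : GammaEV R)
    (hleaf : (gammaE R).neighborSet u = {cls R b}) :
    MaxAnn R (ann R b.1) ∧ (ann R b.1).IsPrime := by
  classical
  have hadj : (gammaE R).Adj u (cls R b) := by
    rw [← SimpleGraph.mem_neighborSet, hleaf]
    exact rfl
  obtain ⟨hneu, a, b', ha, hb', hab'⟩ := hadj
  have ha0 : a.1 ≠ 0 := a.2.1
  -- a.1 * b.1 = 0
  have hab : a.1 * b.1 = 0 := by
    have h1 : ann R b'.1 = ann R b.1 := cls_eq_iff.mp hb'
    have : a.1 ∈ ann R b'.1 := mem_ann_iff.mpr hab'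
    rw [h1] at this
    exact mem_ann_iff.mp this
  -- key: anything killed by a is in class u or cls b
  have killer : ∀ Z : ZD R, a.1 * Z.1 = 0 →
      ann R Z.1 = ann R a.1 ∨ ann R Z.1 = ann R b.1 := by
    intro Z hZ
    by_cases hc : cls R Z = u
    · left
      exact cls_eq_iff.mp (hc.trans ha.symm)
    · right
      have : cls R Z ∈ (gammaE R).neighborSet u := by
        exact ⟨fun h => hc h.symm, a, Z, ha, rfl, hZ⟩
      rw [hleaf] at this
      exact cls_eq_iff.mp this
  -- maximal annihilator above ann b
  obtain ⟨I, ⟨y, hy0, hIy, hbI⟩, hImax⟩ :=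
    (set_has_maximal_iff_noetherian.mpr (inferInstance : IsNoetherianRing R))
      {I : Ideal R | ∃ z : R, z ≠ 0 ∧ I = ann R z ∧ ann R b.1 ≤ I}
      ⟨ann R b.1, b.1, b.2.1, rfl, le_refl _⟩
  subst hIy
  have hMax : ∀ z : R, z ≠ 0 → ann R y ≤ ann R z → ann R y = ann R z := by
    intro z hz hle
    rcases hle.lt_or_eq with hlt | heq
    · exact absurd hlt (hImax _ ⟨z, hz, rfl, hbI.trans hle⟩)
    · exact heq
  have hay : a.1 * y = 0 := mem_ann_iff.mp (hbI (mem_ann_iff.mpr hab))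
  set Y : ZD R := ⟨y, hy0, a.1, ha0, by rw [mul_comm]; exact hay⟩ with hY
  rcases killer Y hay with hu | hb2
  · -- ann y = ann a : derive a contradiction using a third vertex
    exfalso
    -- a² = 0
    have haa : a.1 * a.1 = 0 := by
      have : a.1 ∈ ann R y := hbI (mem_ann_iff.mpr hab)
      rw [show ann R Y.1 = ann R y from rfl] at hu
      rw [hu] at this
      exact mem_ann_iff.mp this
    have hP : ann R y = ann R a.1 := hu
    -- third vertex
    have hthird : ∃ w : GammaEV R, w ≠ u ∧ w ≠ cls R b := by
      by_contra hcon
      push_neg at hcon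
      have hsub : (Set.univ : Set (GammaEV R)) ⊆ {u, cls R b} := by
        intro w _
        rcases eq_or_ne w u with h | h
        · exact Or.inl h
        · exact Or.inr (hcon w h)
      have h2 : (Set.univ : Set (GammaEV R)).encard ≤ 2 := by
        refine (Set.encard_mono hsub).trans ?_
        refine (Set.encard_insert_le _ _).trans ?_
        rw [Set.encard_singleton, one_add_one_eq_two]
      have := hcard.trans h2
      norm_num at this
    obtain ⟨w, hwu, hwb⟩ := hthird
    obtain ⟨C, rfl⟩ := Quotient.exists_rep w
    have hCw : cls R C = Quotient.mk (annSetoid R) C := rfl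
    set c := C.1 with hc
    have hcP : c ∉ ann R a.1 := by
      intro hmem
      have hac : a.1 * c = 0 := by rw [mul_comm]; exact mem_ann_iff.mp hmem
      rcases killer C hac with h | h
      · exact hwu ((cls_eq_iff.mpr h).trans ha)
      · exact hwb (cls_eq_iff.mpr h)
    obtain ⟨d, hd0, hcd⟩ := C.2.2
    -- d * a = 0
    have hda : d * a.1 = 0 := by
      by_contra hda
      have hdaa : (d * a.1) * a.1 = 0 := by rw [mul_assoc, haa, mul_zero]
      set D : ZD R := ⟨d * a.1, hda, a.1, ha0, hdaa⟩ with hD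
      have hcD : c ∈ ann R D.1 := by
        rw [mem_ann_iff]
        show c * (d * a.1) = 0
        rw [← mul_assoc, hcd, zero_mul]
      rcases killer D (by rw [mul_comm]; exact hdaa) with h | h
      · rw [h] at hcD; exact hcP hcD
      · rw [h] at hcD
        exact hcP (hP ▸ hbI hcD)
    -- so d ∈ ann a, d ≠ 0, and c * d = 0 gives c ∈ ann a : contradiction
    set D' : ZD R := ⟨d, hd0, a.1, ha0, hda⟩ with hD'
    have hcD' : c ∈ ann R D'.1 := mem_ann_iff.mpr hcd
    rcases killer D' (by rw [mul_comm]; exact hda) with h | h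
    · rw [h] at hcD'; exact hcP hcD'
    · rw [h] at hcD'
      exact hcP (hP ▸ hbI hcD')
  · -- ann y = ann b : done
    have hyb : ann R y = ann R b.1 := hb2
    have hmaxb : MaxAnn R (ann R b.1) := by
      constructor
      · exact ⟨b.1, b.2.1, rfl⟩
      · intro z hz hle
        rw [← hyb] at hle ⊢
        exact hMax z hz hle
    exact ⟨hmaxb, maxAnn_isPrime hmaxb⟩
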